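/- Let M be a simple matroid with building set 𝓖 on its lattice of flats, and let e be an element of its ground set. Then the set 𝓖 \ e := {S ⊆ E(M) \ {e} : S is a flat of M \ e and cl_M(S) ∈ 𝓖} is a building set of the deletion M \ e. -/

import Mathlib

variable {α : Type*}

/-- The rank of a set in a matroid: the supremum of the cardinalities of
independent subsets of the set. -/
noncomputable def Matroid.mrk (M : Matroid α) (X : Set α) : ℕ :=
  sSup (Set.ncard '' {I | M.Indep I ∧ I ⊆ X})

/-- Deletion of a set `D` from a matroid. -/
def Matroid.mdelete (M : Matroid α) (D : Set α) : Matroid α :=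
  M.restrict (M.E \ D)

/-- A flat of a (simple) matroid is *irreducible* if it is nonempty and cannot
be partitioned into two nonempty flats whose ranks add up to its rank. -/
def Matroid.IrredFlat (M : Matroid α) (F : Set α) : Prop :=
  M.IsFlat F ∧ F.Nonempty ∧
    ¬ ∃ G H : Set α, M.IsFlat G ∧ M.IsFlat H ∧ G.Nonempty ∧ H.Nonempty ∧
      Disjoint G H ∧ G ∪ H = F ∧ M.mrk F = M.mrk G + M.mrk H

/-- A *building set* on the lattice of flats of a simple matroid `M`: a family
of nonempty flats containing all irreducible flats and such that whenever two
members have nonempty meet (intersection), their join (closure of the union)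
is again a member.  (This is the Backman–Danner characterization of building
sets of the geometric lattice of flats.) -/
def Matroid.IsBuildingFam (M : Matroid α) (𝓖 : Set (Set α)) : Prop :=
  (∀ G ∈ 𝓖, M.IsFlat G ∧ G.Nonempty) ∧
  (∀ F : Set α, M.IrredFlat F → F ∈ 𝓖) ∧
  (∀ G ∈ 𝓖, ∀ G' ∈ 𝓖, (G ∩ G').Nonempty → M.closure (G ∪ G') ∈ 𝓖)

namespace Matroid

variable {M : Matroid α} {X Y F R I J : Set α}

/-- The closure of any set is a flat. -/
lemma closure_flat' (M : Matroid α) (X : Set α) : M.IsFlat (M.closure X) := by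
  rw [closure_def]
  have hne : Nonempty ↑{F | M.IsFlat F ∧ X ∩ M.E ⊆ F} :=
    ⟨⟨M.E, ⟨M.ground_isFlat, Set.inter_subset_right⟩⟩⟩
  rw [Set.sInter_eq_iInter]
  exact IsFlat.iInter fun F ↦ F.2.1

lemma flat_of_closure_subset (h : M.closure F ⊆ F) (hF : F ⊆ M.E) : M.IsFlat F := by
  have : F = M.closure F := (M.subset_closure F hF).antisymm h
  rw [this]; exact M.closure_flat' F

/-- Closure in a restriction to a subset of the ground set. -/
lemma restrict_closure_eq'' (hR : R ⊆ M.E) (hX : X ⊆ R) :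
    (M ↾ R).closure X = M.closure X ∩ R := by
  obtain ⟨I, hI⟩ := M.exists_isBasis X (hX.trans hR)
  have hIR : (M ↾ R).IsBasis I X := hI.isBasis_restrict_of_subset hX
  have hIX : I ⊆ R := hI.subset.trans hX
  rw [← hIR.closure_eq_closure, ← hI.closure_eq_closure,
    hIR.indep.closure_eq_setOf_isBasis_insert]
  ext x
  simp only [Set.mem_setOf_eq, isBasis_restrict_iff hR, Set.mem_inter_iff]
  constructor
  · rintro ⟨hb, hsub⟩
    refine ⟨?_, hsub (Set.mem_insert _ _)⟩
    rwa [hI.indep.insert_isBasis_iff_mem_closure] at hb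
  · rintro ⟨hx, hxR⟩
    rw [← hI.indep.insert_isBasis_iff_mem_closure] at hx
    exact ⟨hx, Set.insert_subset hxR hIX⟩

section Finite

variable [M.Finite]

lemma indep_finite (hI : M.Indep I) : I.Finite :=
  M.ground_finite.subset hI.subset_ground

lemma mrk_bddAbove (M : Matroid α) [M.Finite] (X : Set α) :
    BddAbove (Set.ncard '' {I | M.Indep I ∧ I ⊆ X}) := by
  refine ⟨M.E.ncard, ?_⟩
  rintro n ⟨I, ⟨hI, -⟩, rfl⟩
  exact Set.ncard_le_ncard hI.subset_ground M.ground_finite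

lemma le_mrk (hI : M.Indep I) (hIX : I ⊆ X) : I.ncard ≤ M.mrk X :=
  le_csSup (M.mrk_bddAbove X) ⟨I, ⟨hI, hIX⟩, rfl⟩

lemma exists_mrk (M : Matroid α) [M.Finite] (X : Set α) :
    ∃ I, M.Indep I ∧ I ⊆ X ∧ I.ncard = M.mrk X := by
  have hne : (Set.ncard '' {I | M.Indep I ∧ I ⊆ X}).Nonempty :=
    ⟨(∅ : Set α).ncard, ∅, ⟨M.empty_indep, Set.empty_subset X⟩, rfl⟩
  obtain ⟨I, hI, hcard⟩ := Nat.sSup_mem hne (M.mrk_bddAbove X)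
  exact ⟨I, hI.1, hI.2, hcard⟩

lemma mrk_mono (h : X ⊆ Y) : M.mrk X ≤ M.mrk Y := by
  obtain ⟨I, hI, hIX, hcard⟩ := M.exists_mrk X
  rw [← hcard]
  exact le_mrk hI (hIX.trans h)

/-- An independent set inside the closure of an independent set is no larger. -/
lemma ncard_le_of_indep_subset_closure (hI : M.Indep I) (hJ : M.Indep J)
    (hJI : J ⊆ M.closure I) : J.ncard ≤ I.ncard := by
  by_contra hlt
  push_neg at hlt
  have henc : I.encard < J.encard := by
    rw [← (indep_finite hI).cast_ncard_eq, ← (indep_finite hJ).cast_ncard_eq]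
    exact_mod_cast hlt
  obtain ⟨x, hx, hxind⟩ := hI.augment hJ henc
  rw [hI.insert_indep_iff_of_notMem hx.2] at hxind
  exact hxind.2 (hJI hx.1)

/-- A maximum-size independent subset of `X` spans `X`. -/
lemma subset_closure_of_max (hI : M.Indep I) (hIX : I ⊆ X) (hX : X ⊆ M.E)
    (hmax : I.ncard = M.mrk X) : X ⊆ M.closure I := by
  intro x hx
  by_contra hxc
  have hxI : x ∉ I := fun h ↦ hxc (M.subset_closure I hI.subset_ground h)
  have hins : M.Indep (insert x I) := by
    rw [hI.insert_indep_iff_of_notMem hxI]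
    exact ⟨hX hx, hxc⟩
  have hle : (insert x I).ncard ≤ M.mrk X :=
    le_mrk hins (Set.insert_subset hx hIX)
  rw [Set.ncard_insert_of_notMem hxI (indep_finite hI)] at hle
  omega

lemma mrk_closure_eq (hX : X ⊆ M.E) : M.mrk (M.closure X) = M.mrk X := by
  refine le_antisymm ?_ (mrk_mono (M.subset_closure X hX))
  obtain ⟨I, hI, hIX, hIcard⟩ := M.exists_mrk X
  obtain ⟨J, hJ, hJX, hJcard⟩ := M.exists_mrk (M.closure X)
  have hXcl : X ⊆ M.closure I := subset_closure_of_max hI hIX hX hIcard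
  have hcl : M.closure X ⊆ M.closure I := M.closure_subset_closure_of_subset_closure hXcl
  rw [← hJcard, ← hIcard]
  exact ncard_le_of_indep_subset_closure hI hJ (hJX.trans hcl)

lemma mrk_union_le (M : Matroid α) [M.Finite] (X Y : Set α) :
    M.mrk (X ∪ Y) ≤ M.mrk X + M.mrk Y := by
  obtain ⟨K, hK, hKsub, hKcard⟩ := M.exists_mrk (X ∪ Y)
  have hKeq : K = (K ∩ X) ∪ (K ∩ Y) := by
    rw [← Set.inter_union_distrib_left, Set.inter_eq_left.mpr hKsub]
  have h1 : K.ncard ≤ (K ∩ X).ncard + (K ∩ Y).ncard := by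
    conv_lhs => rw [hKeq]
    exact Set.ncard_union_le _ _
  have h2 : (K ∩ X).ncard ≤ M.mrk X :=
    le_mrk (hK.subset Set.inter_subset_left) Set.inter_subset_right
  have h3 : (K ∩ Y).ncard ≤ M.mrk Y :=
    le_mrk (hK.subset Set.inter_subset_left) Set.inter_subset_right
  omega

end Finite

lemma mrk_restrict (M : Matroid α) (R X : Set α) (hX : X ⊆ R) :
    (M ↾ R).mrk X = M.mrk X := by
  unfold Matroid.mrk
  congr 1
  ext n
  constructor <;> rintro ⟨I, ⟨hI, hIX⟩, rfl⟩
  · exact ⟨I, ⟨(restrict_indep_iff.1 hI).1, hIX⟩, rfl⟩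
  · exact ⟨I, ⟨restrict_indep_iff.2 ⟨hI, hIX.trans hX⟩, hIX⟩, rfl⟩

end Matroid

/-- if `𝓖` is a building set on the lattice of flats of a simple
matroid `M` and `e` is an element of the ground set, then
`𝓖 \ e = {S ⊆ E(M) \ {e} : S flat of M \ e and cl_M(S) ∈ 𝓖}` is a building
set of the deletion `M \ e`. -/
theorem building_set_of_deletion (M : Matroid α) [M.Finite]
    (hsimple : ∀ e ∈ M.E, ∀ f ∈ M.E, M.Indep {e, f})
    (𝓖 : Set (Set α)) (h𝓖 : M.IsBuildingFam 𝓖) (e : α) (he : e ∈ M.E) :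
    (M.mdelete {e}).IsBuildingFam
      {S : Set α | (M.mdelete {e}).IsFlat S ∧ M.closure S ∈ 𝓖} := by
  set R : Set α := M.E \ {e} with hRdef
  have hRE : R ⊆ M.E := Set.diff_subset
  have hdel : M.mdelete {e} = M.restrict R := rfl
  have hground : (M.mdelete {e}).E = R := rfl
  haveI : (M.mdelete {e}).Finite := ⟨M.ground_finite.subset hRE⟩
  obtain ⟨h𝓖1, h𝓖2, h𝓖3⟩ := h𝓖
  -- no loops
  have hcl_empty : ∀ x, x ∉ M.closure (∅ : Set α) := by
    intro x hx
    have hxE : x ∈ M.E := M.closure_subset_ground ∅ hx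
    have hind : M.Indep {x} := by
      have := hsimple x hxE x hxE
      simpa using this
    have : M.Indep (insert x (∅ : Set α)) := by simpa using hind
    rw [M.empty_indep.insert_indep_iff_of_notMem (Set.notMem_empty x)] at this
    exact this.2 hx
  refine ⟨?_, ?_, ?_⟩
  · -- members are nonempty flats
    rintro S ⟨hSflat, hScl⟩
    refine ⟨hSflat, ?_⟩
    rw [Set.nonempty_iff_ne_empty]
    rintro rfl
    obtain ⟨x, hx⟩ := (h𝓖1 _ hScl).2
    exact hcl_empty x hx
  · -- irreducible flats belong
    rintro F ⟨hFflat, hFne, hirr⟩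
    have hFR : F ⊆ R := hground ▸ hFflat.subset_ground
    have hFE : F ⊆ M.E := hFR.trans hRE
    set C := M.closure F with hCdef
    have hCflat : M.IsFlat C := M.closure_flat' F
    have hFC : F ⊆ C := M.subset_closure F hFE
    have hCne : C.Nonempty := hFne.mono hFC
    have hFeq : F = C ∩ R := by
      conv_lhs => rw [← hFflat.closure]
      rw [hdel, Matroid.restrict_closure_eq'' hRE hFR]
    refine ⟨hFflat, ?_⟩
    by_cases hCirr : M.IrredFlat C
    · exact h𝓖2 C hCirr
    · exfalso
      rw [Matroid.IrredFlat] at hCirr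
      push_neg at hCirr
      obtain ⟨G, H, hG, hH, hGne, hHne, hdisj, hunion, hrank⟩ := hCirr hCflat hCne
      set G' := G ∩ R with hG'def
      set H' := H ∩ R with hH'def
      have hG'G : G' ⊆ G := Set.inter_subset_left
      have hH'H : H' ⊆ H := Set.inter_subset_left
      have hunion' : G' ∪ H' = F := by
        rw [hG'def, hH'def, ← Set.union_inter_distrib_right, hunion, ← hFeq]
      -- nonemptiness of the restrictions
      have hpiece : ∀ A B : Set α, M.IsFlat A → M.IsFlat B → A.Nonempty → Disjoint A B →
          A ∪ B = C → (A ∩ R).Nonempty := by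
        intro A B hA hB hAne hAB hABC
        rw [Set.nonempty_iff_ne_empty]
        intro hA'
        have hAe : A ⊆ {e} := by
          intro x hxA
          by_contra hxe
          exact (Set.eq_empty_iff_forall_notMem.1 hA' x)
            ⟨hxA, hA.subset_ground hxA, hxe⟩
        have heA : e ∈ A := by
          obtain ⟨a, ha⟩ := hAne
          have := hAe ha
          rw [Set.mem_singleton_iff] at this
          rwa [← this]
        have heB : e ∉ B := Set.disjoint_left.1 hAB heA
        have hFB : F ⊆ B := by
          rw [hFeq, ← hABC]
          rintro x ⟨hx1, hx2⟩
          rcases hx1 with hx | hx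
          · exact absurd (hAe hx) hx2.2
          · exact hx
        have hCB : C ⊆ B := by
          rw [hCdef, ← hB.closure]
          exact M.closure_subset_closure hFB
        exact heB (hCB (hABC ▸ Set.mem_union_left _ heA))
      have hG'ne : G'.Nonempty := hpiece G H hG hH hGne hdisj hunion
      have hH'ne : H'.Nonempty := hpiece H G hH hG hHne hdisj.symm (Set.union_comm G H ▸ hunion)
      -- flats of the deletion
      have hflat' : ∀ A : Set α, M.IsFlat A → (M.mdelete {e}).IsFlat (A ∩ R) := by
        intro A hA
        rw [hdel]
        refine Matroid.flat_of_closure_subset ?_ ?_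
        · rw [Matroid.restrict_closure_eq'' hRE Set.inter_subset_right]
          refine Set.inter_subset_inter_left R ?_
          calc M.closure (A ∩ R) ⊆ M.closure A := M.closure_subset_closure Set.inter_subset_left
            _ = A := hA.closure
        · rw [Matroid.restrict_ground_eq]
          exact Set.inter_subset_right
      -- ranks
      have hmrkF : M.mrk F = M.mrk G' + M.mrk H' := by
        have h1 : M.mrk F ≤ M.mrk G' + M.mrk H' := by
          rw [← hunion']; exact M.mrk_union_le G' H'
        have h2 : M.mrk G' ≤ M.mrk G := Matroid.mrk_mono hG'G
        have h3 : M.mrk H' ≤ M.mrk H := Matroid.mrk_mono hH'H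
        have h4 : M.mrk C = M.mrk F := Matroid.mrk_closure_eq hFE
        omega
      refine hirr ⟨G', H', hflat' G hG, hflat' H hH, hG'ne, hH'ne,
        hdisj.mono hG'G hH'H, hunion', ?_⟩
      rw [hdel, Matroid.mrk_restrict M R F hFR,
        Matroid.mrk_restrict M R G' Set.inter_subset_right,
        Matroid.mrk_restrict M R H' Set.inter_subset_right]
      exact hmrkF
  · -- closed under joins of intersecting members
    rintro S ⟨hSflat, hScl⟩ S' ⟨hS'flat, hS'cl⟩ hinter
    have hSR : S ⊆ R := hground ▸ hSflat.subset_ground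
    have hS'R : S' ⊆ R := hground ▸ hS'flat.subset_ground
    have hUR : S ∪ S' ⊆ R := Set.union_subset hSR hS'R
    have hUE : S ∪ S' ⊆ M.E := hUR.trans hRE
    refine ⟨(M.mdelete {e}).closure_flat' _, ?_⟩
    have hkey : M.closure ((M.mdelete {e}).closure (S ∪ S')) = M.closure (S ∪ S') := by
      rw [hdel, Matroid.restrict_closure_eq'' hRE hUR]
      refine le_antisymm ?_ ?_
      · exact M.closure_subset_closure_of_subset_closure Set.inter_subset_left
      · refine M.closure_subset_closure ?_
        exact Set.subset_inter (M.subset_closure _ hUE) hUR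
    rw [hkey]
    have := h𝓖3 _ hScl _ hS'cl (hinter.mono (Set.inter_subset_inter
      (M.subset_closure S (hSR.trans hRE)) (M.subset_closure S' (hS'R.trans hRE))))
    rwa [Matroid.closure_union_closure_left_eq, Matroid.closure_union_closure_right_eq] at this
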